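/- arXiv:2211.16966 — 2 statements merged into one kernel-verified Lean document; each statement's English description precedes it below -/
import Mathlib

section
/- If a uniformly 3-connected graph G on n vertices is constructed from complete graphs on four vertices by a sequence of j bridge operations, t edge joins, p primary spoke operations and s secondary spoke operations, then j + 1 ≥ p and consequently p ≤ ⌊(n−2)/3⌋. -/
open SimpleGraph

/-- The degree of a vertex, as the cardinality of its neighbor set. -/
noncomputable def vdeg {V : Type*} (G : SimpleGraph V) (v : V) : ℕ :=
  (G.neighborSet v).ncard

/-- The minimum degree of a graph. -/
noncomputable def minDeg {V : Type*} (G : SimpleGraph V) : ℕ :=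
  sInf (Set.range (vdeg G))

/-- `ν(G)`: the number of vertices of minimum degree. -/
noncomputable def nu {V : Type*} (G : SimpleGraph V) : ℕ :=
  {v | vdeg G v = minDeg G}.ncard

/-- A family of `m` pairwise independent (i.e. internally vertex-disjoint, pairwise distinct)
paths from `u` to `v`. -/
def IsIndepPathFamily {V : Type*} (G : SimpleGraph V) {u v : V} {m : ℕ}
    (W : Fin m → G.Walk u v) : Prop :=
  (∀ i, (W i).IsPath) ∧ Function.Injective W ∧
    ∀ i j, i ≠ j → ∀ x, x ∈ (W i).support → x ∈ (W j).support → x = u ∨ x = v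

/-- A graph on at least `k+1` vertices is uniformly `k`-connected if each pair of its vertices
is connected by `k` and not more than `k` independent paths. -/
def UniformlyConnected (k : ℕ) {V : Type*} [Fintype V] (G : SimpleGraph V) : Prop :=
  k + 1 ≤ Fintype.card V ∧
    ∀ u v : V, u ≠ v →
      (∃ W : Fin k → G.Walk u v, IsIndepPathFamily G W) ∧
      ∀ m : ℕ, (∃ W : Fin m → G.Walk u v, IsIndepPathFamily G W) → m ≤ k

/-- `k`-connected: more than `k` vertices, and still connected after deleting any fewer
than `k` vertices. -/
def KConnected (k : ℕ) {V : Type*} [Fintype V] (G : SimpleGraph V) : Prop :=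
  k < Fintype.card V ∧
    ∀ S : Finset V, S.card < k → (G.induce {v : V | v ∉ S}).Connected
/-- A finite simple graph, bundled with its vertex type. -/
structure FinGraph where
  V : Type
  [instFintype : Fintype V]
  graph : SimpleGraph V

attribute [instance] FinGraph.instFintype
/-- Hypothesis of the bridge operation: `v` has exactly the three distinct
neighbors `x`, `y`, `z` (so `v` has degree 3 and neighborhood `{x, y, z}`). -/
def BridgeHyp {V : Type*} (G : SimpleGraph V) (v x y z : V) : Prop :=
  x ≠ y ∧ x ≠ z ∧ y ≠ z ∧ G.neighborSet v = {x, y, z}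

/-- The bridge operation: `(G1 − v1) ∪ (G2 − v2) + x1x2 + y1y2 + z1z2`. -/
def BridgeGraph {V1 V2 : Type*} (G1 : SimpleGraph V1) (G2 : SimpleGraph V2)
    (v1 x1 y1 z1 : V1) (v2 x2 y2 z2 : V2) :
    SimpleGraph ({a : V1 // a ≠ v1} ⊕ {b : V2 // b ≠ v2}) :=
  SimpleGraph.fromRel (fun p q =>
    match p, q with
    | Sum.inl a, Sum.inl a' => G1.Adj a.1 a'.1
    | Sum.inr b, Sum.inr b' => G2.Adj b.1 b'.1
    | Sum.inl a, Sum.inr b =>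
        (a.1 = x1 ∧ b.1 = x2) ∨ (a.1 = y1 ∧ b.1 = y2) ∨ (a.1 = z1 ∧ b.1 = z2)
    | Sum.inr _, Sum.inl _ => False)
/-- Hypotheses of the spoke operation: `v`, `w`, `x` are distinct, `vw` is an edge,
and every vertex other than possibly `x` has degree 3. -/
def SpokeHyp {V : Type*} (G : SimpleGraph V) (v w x : V) : Prop :=
  v ≠ w ∧ v ≠ x ∧ w ≠ x ∧ G.Adj v w ∧ ∀ z : V, z ≠ x → vdeg G z = 3

/-- The spoke operation: `G + y − vw + vy + wy + xy`, where the new vertex `y`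
is `Sum.inr ()`. -/
def SpokeGraph {V : Type*} (G : SimpleGraph V) (v w x : V) : SimpleGraph (V ⊕ Unit) :=
  SimpleGraph.fromRel (fun p q =>
    match p, q with
    | Sum.inl a, Sum.inl b => G.Adj a b ∧ ¬(a = v ∧ b = w) ∧ ¬(a = w ∧ b = v)
    | Sum.inl a, Sum.inr _ => a = v ∨ a = w ∨ a = x
    | Sum.inr _, _ => False)
/-- The edge join of the edges `ab` and `cd`:
`G + x + y − ab − cd + ax + xb + cy + yd + xy`, where the new vertices `x` and `y`
are `Sum.inr false` and `Sum.inr true`. -/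
def EdgeJoinGraph {V : Type*} (G : SimpleGraph V) (a b c d : V) : SimpleGraph (V ⊕ Bool) :=
  SimpleGraph.fromRel (fun p q =>
    match p, q with
    | Sum.inl u, Sum.inl u' => G.Adj u u' ∧ ¬(u = a ∧ u' = b) ∧ ¬(u = b ∧ u' = a) ∧
        ¬(u = c ∧ u' = d) ∧ ¬(u = d ∧ u' = c)
    | Sum.inl u, Sum.inr false => u = a ∨ u = b
    | Sum.inl u, Sum.inr true => u = c ∨ u = d
    | Sum.inr i, Sum.inr i' => i ≠ i'
    | Sum.inr _, Sum.inl _ => False)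
/-- `H` is (up to isomorphism) the result of applying the bridge operation to `G1`, `G2`. -/
def IsBridgeOf (H G1 G2 : FinGraph) : Prop :=
  ∃ (v1 x1 y1 z1 : G1.V) (v2 x2 y2 z2 : G2.V),
    BridgeHyp G1.graph v1 x1 y1 z1 ∧ BridgeHyp G2.graph v2 x2 y2 z2 ∧
    Nonempty (H.graph ≃g BridgeGraph G1.graph G2.graph v1 x1 y1 z1 v2 x2 y2 z2)
/-- `H` is the result of a primary spoke operation on `G'` (here `deg x = 3`). -/
def IsPrimarySpokeOf (H G' : FinGraph) : Prop :=
  ∃ v w x : G'.V, SpokeHyp G'.graph v w x ∧ vdeg G'.graph x = 3 ∧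
    Nonempty (H.graph ≃g SpokeGraph G'.graph v w x)

/-- `H` is the result of a secondary spoke operation on `G'` (here `deg x > 3`). -/
def IsSecondarySpokeOf (H G' : FinGraph) : Prop :=
  ∃ v w x : G'.V, SpokeHyp G'.graph v w x ∧ 3 < vdeg G'.graph x ∧
    Nonempty (H.graph ≃g SpokeGraph G'.graph v w x)
/-- `H` is the result of an edge join of two distinct edges of the 3-regular
3-connected graph `G'`. -/
def IsEdgeJoinOf (H G' : FinGraph) : Prop :=
  (∀ z : G'.V, vdeg G'.graph z = 3) ∧ KConnected 3 G'.graph ∧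
  ∃ a b c d : G'.V, G'.graph.Adj a b ∧ G'.graph.Adj c d ∧ s(a, b) ≠ s(c, d) ∧
    Nonempty (H.graph ≃g EdgeJoinGraph G'.graph a b c d)
/-- `Constructed G j t p s`: the graph `G` is constructed from complete graphs on four
vertices by a sequence of `j` bridge operations, `t` edge joins, `p` primary spoke
operations and `s` secondary spoke operations. -/
inductive Constructed : FinGraph → ℕ → ℕ → ℕ → ℕ → Prop
  | base (G : FinGraph) : Nonempty (G.graph ≃g (⊤ : SimpleGraph (Fin 4))) →
      Constructed G 0 0 0 0
  | bridge (G G1 G2 : FinGraph) (j1 t1 p1 s1 j2 t2 p2 s2 : ℕ) :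
      Constructed G1 j1 t1 p1 s1 → Constructed G2 j2 t2 p2 s2 → IsBridgeOf G G1 G2 →
      Constructed G (j1 + j2 + 1) (t1 + t2) (p1 + p2) (s1 + s2)
  | edgeJoin (G G' : FinGraph) (j t p s : ℕ) :
      Constructed G' j t p s → IsEdgeJoinOf G G' → Constructed G j (t + 1) p s
  | primarySpoke (G G' : FinGraph) (j t p s : ℕ) :
      Constructed G' j t p s → IsPrimarySpokeOf G G' → Constructed G j t (p + 1) s
  | secondarySpoke (G G' : FinGraph) (j t p s : ℕ) :
      Constructed G' j t p s → IsSecondarySpokeOf G G' → Constructed G j t p (s + 1)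


section Basics

lemma vdeg_eq_natCard {V : Type*} (G : SimpleGraph V) (v : V) :
    vdeg G v = Nat.card (G.neighborSet v) := (Nat.card_coe_set_eq _).symm

lemma vdeg_map {V W : Type*} {G : SimpleGraph V} {H : SimpleGraph W} (e : G ≃g H) (v : V) :
    vdeg H (e v) = vdeg G v := by
  rw [vdeg_eq_natCard, vdeg_eq_natCard]
  exact Nat.card_congr (e.mapNeighborSet v).symm

lemma ncard_compl_singleton {V : Type*} [Finite V] (v : V) :
    ({v}ᶜ : Set V).ncard = Nat.card V - 1 := by
  rw [show ({v}ᶜ : Set V) = Set.univ \ {v} by rw [Set.compl_eq_univ_diff],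
    Set.ncard_diff (by simp), Set.ncard_univ, Set.ncard_singleton]

lemma vdeg_top_fin4 (v : Fin 4) : vdeg (⊤ : SimpleGraph (Fin 4)) v = 3 := by
  have h : (⊤ : SimpleGraph (Fin 4)).neighborSet v = {v}ᶜ := by
    ext w; simp [Set.mem_compl_iff]
  rw [vdeg, h, ncard_compl_singleton]
  simp

lemma card_subtype_ne {V : Type*} [Finite V] (v : V) :
    Nat.card {a : V // a ≠ v} = Nat.card V - 1 := by
  have h : Nat.card {a : V // a ≠ v} = ({v}ᶜ : Set V).ncard := by
    rw [← Nat.card_coe_set_eq]; rfl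
  rw [h, ncard_compl_singleton]

lemma bigset_of_reg {V : Type*} {G : SimpleGraph V} (hreg : ∀ z, vdeg G z = 3) :
    {v | 3 < vdeg G v} = ∅ := by
  ext z; simp [hreg z]

lemma bigset_of_one {V : Type*} {G : SimpleGraph V} {x : V}
    (hreg : ∀ z, z ≠ x → vdeg G z = 3) (hx : 3 < vdeg G x) :
    {v | 3 < vdeg G v} = {x} := by
  ext z
  simp only [Set.mem_setOf_eq, Set.mem_singleton_iff]
  by_cases hz : z = x
  · subst hz; simp [hx]
  · simp [hreg z hz, hz]

lemma bigset_ncard_iso {V W : Type*} {G : SimpleGraph V} {H : SimpleGraph W} (e : G ≃g H) :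
    {w | 3 < vdeg H w}.ncard = {v | 3 < vdeg G v}.ncard := by
  have e2 : ↥{v | 3 < vdeg G v} ≃ ↥{w | 3 < vdeg H w} :=
    e.toEquiv.subtypeEquiv (fun v => by
      have h := vdeg_map e v
      constructor
      · intro hv
        show 3 < vdeg H (e.toEquiv v)
        rw [show vdeg H (e.toEquiv v) = vdeg G v from h]
        exact hv
      · intro hv
        have h2 : 3 < vdeg H (e.toEquiv v) := hv
        rwa [show vdeg H (e.toEquiv v) = vdeg G v from h] at h2)
  rw [← Nat.card_coe_set_eq, ← Nat.card_coe_set_eq]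
  exact Nat.card_congr e2.symm

end Basics

section Spoke
variable {V : Type*} {G : SimpleGraph V} {v w x : V}

lemma spoke_adj_inl_inl {a b : V} :
    (SpokeGraph G v w x).Adj (Sum.inl a) (Sum.inl b) ↔
      G.Adj a b ∧ ¬(a = v ∧ b = w) ∧ ¬(a = w ∧ b = v) := by
  rw [SpokeGraph, fromRel_adj]
  constructor
  · rintro ⟨hne, h | h⟩
    · exact h
    · exact ⟨h.1.symm, fun ⟨h1, h2⟩ => h.2.2 ⟨h2, h1⟩, fun ⟨h1, h2⟩ => h.2.1 ⟨h2, h1⟩⟩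
  · rintro ⟨h, h1, h2⟩
    exact ⟨fun hh => h.ne (Sum.inl.inj hh), Or.inl ⟨h, h1, h2⟩⟩

lemma spoke_adj_inl_inr {a : V} {u : Unit} :
    (SpokeGraph G v w x).Adj (Sum.inl a) (Sum.inr u) ↔ (a = v ∨ a = w ∨ a = x) := by
  rw [SpokeGraph, fromRel_adj]
  constructor
  · rintro ⟨_, h | h⟩
    · exact h
    · exact h.elim
  · intro h
    exact ⟨Sum.inl_ne_inr, Or.inl h⟩

lemma spoke_not_adj_inr_inr {u u' : Unit} :
    ¬ (SpokeGraph G v w x).Adj (Sum.inr u) (Sum.inr u') := by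
  rw [SpokeGraph, fromRel_adj]
  rintro ⟨_, h | h⟩ <;> exact h

lemma spoke_comm : SpokeGraph G v w x = SpokeGraph G w v x := by
  ext p q
  cases p with
  | inl a => cases q with
    | inl b => rw [spoke_adj_inl_inl, spoke_adj_inl_inl]; tauto
    | inr u => rw [spoke_adj_inl_inr, spoke_adj_inl_inr]; tauto
  | inr u => cases q with
    | inl b =>
        rw [adj_comm (G := SpokeGraph G v w x) (Sum.inr u) (Sum.inl b),
          adj_comm (G := SpokeGraph G w v x) (Sum.inr u) (Sum.inl b),
          spoke_adj_inl_inr, spoke_adj_inl_inr]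
        tauto
    | inr u' => simp [spoke_not_adj_inr_inr]

variable [Finite V]

lemma spoke_vdeg_inl_other {a : V} (ha1 : a ≠ v) (ha2 : a ≠ w) (ha3 : a ≠ x) :
    vdeg (SpokeGraph G v w x) (Sum.inl a) = vdeg G a := by
  have hN : (SpokeGraph G v w x).neighborSet (Sum.inl a) = Sum.inl '' (G.neighborSet a) := by
    ext q
    cases q with
    | inl b =>
        rw [mem_neighborSet, spoke_adj_inl_inl]
        simp only [Set.mem_image, mem_neighborSet]
        constructor
        · rintro ⟨h, -, -⟩; exact ⟨b, h, rfl⟩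
        · rintro ⟨b', hb', hbe⟩
          cases Sum.inl.inj hbe
          exact ⟨hb', fun h => ha1 h.1, fun h => ha2 h.1⟩
    | inr u =>
        rw [mem_neighborSet, spoke_adj_inl_inr]
        simp [ha1, ha2, ha3]
  rw [vdeg, hN, Set.ncard_image_of_injective _ Sum.inl_injective]; rfl

lemma spoke_vdeg_inl_v (hvw : v ≠ w) (hadj : G.Adj v w) :
    vdeg (SpokeGraph G v w x) (Sum.inl v) = vdeg G v := by
  have hN : (SpokeGraph G v w x).neighborSet (Sum.inl v) =
      insert (Sum.inr ()) (Sum.inl '' (G.neighborSet v \ {w})) := by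
    ext q
    cases q with
    | inl b =>
        rw [mem_neighborSet, spoke_adj_inl_inl]
        constructor
        · rintro ⟨h, h1, -⟩
          exact Set.mem_insert_of_mem _ ⟨b, ⟨h, fun hb => h1 ⟨rfl, hb⟩⟩, rfl⟩
        · intro hq
          rcases Set.mem_insert_iff.1 hq with hq | ⟨b', ⟨hb', hbw⟩, hbe⟩
          · exact absurd hq (by simp)
          · cases Sum.inl.inj hbe
            exact ⟨hb', fun h => hbw h.2, fun h => hvw h.1⟩
    | inr u =>
        rw [mem_neighborSet, spoke_adj_inl_inr]
        cases u
        constructor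
        · intro _; exact Set.mem_insert _ _
        · intro _; exact Or.inl rfl
  have hw : w ∈ G.neighborSet v := hadj
  have hmem : G.neighborSet v = insert w (G.neighborSet v \ {w}) := by
    rw [Set.insert_diff_singleton, Set.insert_eq_self.2 hw]
  have hr : vdeg G v = (G.neighborSet v \ {w}).ncard + 1 := by
    rw [vdeg]
    conv_lhs => rw [hmem]
    rw [Set.ncard_insert_of_notMem (by simp)]
  rw [vdeg, hN, Set.ncard_insert_of_notMem (by simp),
      Set.ncard_image_of_injective _ Sum.inl_injective, hr]

lemma spoke_vdeg_inl_x (hvx : v ≠ x) (hwx : w ≠ x) :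
    vdeg (SpokeGraph G v w x) (Sum.inl x) = vdeg G x + 1 := by
  have hN : (SpokeGraph G v w x).neighborSet (Sum.inl x) =
      insert (Sum.inr ()) (Sum.inl '' G.neighborSet x) := by
    ext q
    cases q with
    | inl b =>
        rw [mem_neighborSet, spoke_adj_inl_inl]
        constructor
        · rintro ⟨h, -, -⟩
          exact Set.mem_insert_of_mem _ ⟨b, h, rfl⟩
        · intro hq
          rcases Set.mem_insert_iff.1 hq with hq | ⟨b', hb', hbe⟩
          · exact absurd hq (by simp)
          · cases Sum.inl.inj hbe
            exact ⟨hb', fun h => hvx h.1.symm, fun h => hwx h.1.symm⟩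
    | inr u =>
        rw [mem_neighborSet, spoke_adj_inl_inr]
        cases u
        constructor
        · intro _; exact Set.mem_insert _ _
        · intro _; exact Or.inr (Or.inr rfl)
  rw [vdeg, hN, Set.ncard_insert_of_notMem (by simp),
      Set.ncard_image_of_injective _ Sum.inl_injective]
  rw [vdeg, Nat.add_comm]

lemma spoke_vdeg_inr (hvw : v ≠ w) (hvx : v ≠ x) (hwx : w ≠ x) (u : Unit) :
    vdeg (SpokeGraph G v w x) (Sum.inr u) = 3 := by
  have hN : (SpokeGraph G v w x).neighborSet (Sum.inr u) =
      {Sum.inl v, Sum.inl w, Sum.inl x} := by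
    ext q
    cases q with
    | inl b =>
        rw [mem_neighborSet, adj_comm, spoke_adj_inl_inr]
        simp [Sum.inl_injective.eq_iff]
    | inr u' =>
        simp [spoke_not_adj_inr_inr]
  rw [vdeg, hN, Set.ncard_insert_of_notMem (by simp [hvw, hvx]),
      Set.ncard_insert_of_notMem (by simp [hwx]), Set.ncard_singleton]


lemma spoke_bigset (hvw : v ≠ w) (hvx : v ≠ x) (hwx : w ≠ x) (hadj : G.Adj v w)
    (hreg : ∀ z, z ≠ x → vdeg G z = 3) (hx : 3 ≤ vdeg G x) :
    {q | 3 < vdeg (SpokeGraph G v w x) q} = {Sum.inl x} := by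
  ext q
  simp only [Set.mem_setOf_eq, Set.mem_singleton_iff]
  cases q with
  | inl a =>
      by_cases hax : a = x
      · subst hax
        rw [spoke_vdeg_inl_x hvx hwx]
        constructor
        · intro _; rfl
        · intro _; omega
      by_cases hav : a = v
      · subst hav
        rw [spoke_vdeg_inl_v hvw hadj, hreg _ hax]
        simp [hax]
      by_cases haw : a = w
      · subst haw
        rw [spoke_comm, spoke_vdeg_inl_v hvw.symm hadj.symm, hreg _ hax]
        simp [hax]
      · rw [spoke_vdeg_inl_other hav haw hax, hreg a hax]
        simp [hax]
  | inr u =>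
      rw [spoke_vdeg_inr hvw hvx hwx]
      simp

end Spoke

section Bridge
-- helper counting lemmas
lemma ncard_val_preimage {V : Type*} [Finite V] (v : V) (S : Set V) :
    ((Subtype.val : {a : V // a ≠ v} → V) ⁻¹' S).ncard = (S \ {v}).ncard := by
  rw [← Set.ncard_image_of_injective _ Subtype.val_injective,
    Set.image_preimage_eq_inter_range, Subtype.range_coe_subtype]
  congr 1

lemma ncard_inl_union_inr {α β : Type*} [Finite α] [Finite β] (A : Set α) (B : Set β) :
    ((Sum.inl '' A ∪ Sum.inr '' B : Set (α ⊕ β))).ncard = A.ncard + B.ncard := by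
  have hdisj : Disjoint (Sum.inl '' A : Set (α ⊕ β)) (Sum.inr '' B) := by
    rw [Set.disjoint_left]
    rintro q ⟨a, -, rfl⟩ ⟨b, -, hb⟩
    exact Sum.inl_ne_inr hb.symm
  rw [Set.ncard_union_eq hdisj (Set.toFinite _) (Set.toFinite _),
    Set.ncard_image_of_injective _ Sum.inl_injective,
    Set.ncard_image_of_injective _ Sum.inr_injective]

variable {V1 V2 : Type*} {G1 : SimpleGraph V1} {G2 : SimpleGraph V2}
  {v1 x1 y1 z1 : V1} {v2 x2 y2 z2 : V2}

lemma bridge_adj_inl_inl {a a' : {a : V1 // a ≠ v1}} :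
    (BridgeGraph G1 G2 v1 x1 y1 z1 v2 x2 y2 z2).Adj (Sum.inl a) (Sum.inl a') ↔
      G1.Adj a.1 a'.1 := by
  rw [BridgeGraph, fromRel_adj]
  constructor
  · rintro ⟨-, h | h⟩
    · exact h
    · exact h.symm
  · intro h
    exact ⟨fun hh => h.ne (congrArg Subtype.val (Sum.inl.inj hh)), Or.inl h⟩

lemma bridge_adj_inr_inr {b b' : {b : V2 // b ≠ v2}} :
    (BridgeGraph G1 G2 v1 x1 y1 z1 v2 x2 y2 z2).Adj (Sum.inr b) (Sum.inr b') ↔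
      G2.Adj b.1 b'.1 := by
  rw [BridgeGraph, fromRel_adj]
  constructor
  · rintro ⟨-, h | h⟩
    · exact h
    · exact h.symm
  · intro h
    exact ⟨fun hh => h.ne (congrArg Subtype.val (Sum.inr.inj hh)), Or.inl h⟩

lemma bridge_adj_inl_inr {a : {a : V1 // a ≠ v1}} {b : {b : V2 // b ≠ v2}} :
    (BridgeGraph G1 G2 v1 x1 y1 z1 v2 x2 y2 z2).Adj (Sum.inl a) (Sum.inr b) ↔
      ((a.1 = x1 ∧ b.1 = x2) ∨ (a.1 = y1 ∧ b.1 = y2) ∨ (a.1 = z1 ∧ b.1 = z2)) := by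
  rw [BridgeGraph, fromRel_adj]
  constructor
  · rintro ⟨-, h | h⟩
    · exact h
    · exact h.elim
  · intro h
    exact ⟨Sum.inl_ne_inr, Or.inl h⟩

def bridgeSwapIso :
    BridgeGraph G1 G2 v1 x1 y1 z1 v2 x2 y2 z2 ≃g BridgeGraph G2 G1 v2 x2 y2 z2 v1 x1 y1 z1 where
  toEquiv := Equiv.sumComm _ _
  map_rel_iff' := by
    rintro (a | b) (a' | b') <;>
        simp only [Equiv.sumComm_apply, Sum.swap_inl, Sum.swap_inr]
    · rw [bridge_adj_inr_inr, bridge_adj_inl_inl]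
    · rw [adj_comm, bridge_adj_inl_inr, bridge_adj_inl_inr]
      tauto
    · rw [bridge_adj_inl_inr, adj_comm, bridge_adj_inl_inr]
      tauto
    · rw [bridge_adj_inl_inl, bridge_adj_inr_inr]

lemma bridge_perm12 :
    BridgeGraph G1 G2 v1 x1 y1 z1 v2 x2 y2 z2 = BridgeGraph G1 G2 v1 y1 x1 z1 v2 y2 x2 z2 := by
  ext p q
  cases p with
  | inl a => cases q with
    | inl a' => rw [bridge_adj_inl_inl, bridge_adj_inl_inl]
    | inr b => rw [bridge_adj_inl_inr, bridge_adj_inl_inr]; tauto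
  | inr b => cases q with
    | inl a' => rw [adj_comm, bridge_adj_inl_inr, adj_comm, bridge_adj_inl_inr]; tauto
    | inr b' => rw [bridge_adj_inr_inr, bridge_adj_inr_inr]

lemma bridge_perm13 :
    BridgeGraph G1 G2 v1 x1 y1 z1 v2 x2 y2 z2 = BridgeGraph G1 G2 v1 z1 y1 x1 v2 z2 y2 x2 := by
  ext p q
  cases p with
  | inl a => cases q with
    | inl a' => rw [bridge_adj_inl_inl, bridge_adj_inl_inl]
    | inr b => rw [bridge_adj_inl_inr, bridge_adj_inl_inr]; tauto
  | inr b => cases q with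
    | inl a' => rw [adj_comm, bridge_adj_inl_inr, adj_comm, bridge_adj_inl_inr]; tauto
    | inr b' => rw [bridge_adj_inr_inr, bridge_adj_inr_inr]

lemma BridgeHyp.swap12 (h : BridgeHyp G1 v1 x1 y1 z1) : BridgeHyp G1 v1 y1 x1 z1 := by
  obtain ⟨hxy, hxz, hyz, hN⟩ := h
  refine ⟨hxy.symm, hyz, hxz, ?_⟩
  rw [hN]
  ext u; simp; tauto

lemma BridgeHyp.swap13 (h : BridgeHyp G1 v1 x1 y1 z1) : BridgeHyp G1 v1 z1 y1 x1 := by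
  obtain ⟨hxy, hxz, hyz, hN⟩ := h
  refine ⟨hyz.symm, hxz.symm, hxy.symm, ?_⟩
  rw [hN]
  ext u; simp; tauto

lemma BridgeHyp.vdeg_eq {V : Type*} [Finite V] {G : SimpleGraph V} {v x y z : V}
    (h : BridgeHyp G v x y z) : vdeg G v = 3 := by
  rw [vdeg, h.2.2.2, Set.ncard_insert_of_notMem (by simp [h.1, h.2.1]),
    Set.ncard_insert_of_notMem (by simp [h.2.2.1]), Set.ncard_singleton]

section BridgeDeg
variable [Finite V1] [Finite V2]

lemma bridge_vdeg_inl_x (h1 : BridgeHyp G1 v1 x1 y1 z1) (h2 : BridgeHyp G2 v2 x2 y2 z2)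
    (a : {a : V1 // a ≠ v1}) (ha : a.1 = x1) :
    vdeg (BridgeGraph G1 G2 v1 x1 y1 z1 v2 x2 y2 z2) (Sum.inl a) = vdeg G1 a.1 := by
  have hx2 : x2 ∈ G2.neighborSet v2 := by rw [h2.2.2.2]; exact Set.mem_insert _ _
  have hx2v : x2 ≠ v2 := (G2.ne_of_adj hx2).symm
  have hx1 : x1 ∈ G1.neighborSet v1 := by rw [h1.2.2.2]; exact Set.mem_insert _ _
  have hva : v1 ∈ G1.neighborSet a.1 := by
    rw [mem_neighborSet]; rw [ha]; exact ((mem_neighborSet _ _ _).1 hx1).symm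
  have hN : (BridgeGraph G1 G2 v1 x1 y1 z1 v2 x2 y2 z2).neighborSet (Sum.inl a) =
      insert (Sum.inr ⟨x2, hx2v⟩)
        (Sum.inl '' ((Subtype.val : {a : V1 // a ≠ v1} → V1) ⁻¹' G1.neighborSet a.1)) := by
    ext q
    cases q with
    | inl a' =>
        rw [mem_neighborSet, bridge_adj_inl_inl]
        constructor
        · intro h; exact Set.mem_insert_of_mem _ ⟨a', h, rfl⟩
        · intro hq
          rcases Set.mem_insert_iff.1 hq with hq | ⟨a'', ha'', he⟩
          · exact absurd hq (by simp)
          · cases Sum.inl.inj he; exact ha''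
    | inr b =>
        rw [mem_neighborSet, bridge_adj_inl_inr]
        constructor
        · rintro (⟨-, hb⟩ | ⟨hy, -⟩ | ⟨hz, -⟩)
          · exact Set.mem_insert_iff.2 (Or.inl (by rw [Sum.inr.injEq]; exact Subtype.ext hb))
          · exact absurd (ha ▸ hy) h1.1
          · exact absurd (ha ▸ hz) h1.2.1
        · intro hq
          rcases Set.mem_insert_iff.1 hq with hq | ⟨a'', -, he⟩
          · cases Sum.inr.inj hq; exact Or.inl ⟨ha, rfl⟩
          · exact absurd he (by simp)
  have hmem : G1.neighborSet a.1 = insert v1 (G1.neighborSet a.1 \ {v1}) := by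
    rw [Set.insert_diff_singleton, Set.insert_eq_self.2 hva]
  have hr : vdeg G1 a.1 = (G1.neighborSet a.1 \ {v1}).ncard + 1 := by
    rw [vdeg]
    conv_lhs => rw [hmem]
    rw [Set.ncard_insert_of_notMem (by simp)]
  rw [vdeg, hN, Set.ncard_insert_of_notMem (by simp),
    Set.ncard_image_of_injective _ Sum.inl_injective, ncard_val_preimage, hr]

lemma bridge_vdeg_inl_other (h1 : BridgeHyp G1 v1 x1 y1 z1)
    (a : {a : V1 // a ≠ v1}) (ha : a.1 ∉ ({x1, y1, z1} : Set V1)) :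
    vdeg (BridgeGraph G1 G2 v1 x1 y1 z1 v2 x2 y2 z2) (Sum.inl a) = vdeg G1 a.1 := by
  have hva : v1 ∉ G1.neighborSet a.1 := by
    rw [mem_neighborSet, adj_comm, ← mem_neighborSet, h1.2.2.2]
    exact ha
  have hN : (BridgeGraph G1 G2 v1 x1 y1 z1 v2 x2 y2 z2).neighborSet (Sum.inl a) =
      Sum.inl '' ((Subtype.val : {a : V1 // a ≠ v1} → V1) ⁻¹' G1.neighborSet a.1) := by
    ext q
    cases q with
    | inl a' =>
        rw [mem_neighborSet, bridge_adj_inl_inl]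
        constructor
        · intro h; exact ⟨a', h, rfl⟩
        · rintro ⟨a'', ha'', he⟩
          cases Sum.inl.inj he; exact ha''
    | inr b =>
        rw [mem_neighborSet, bridge_adj_inl_inr]
        constructor
        · rintro (⟨hx, -⟩ | ⟨hy, -⟩ | ⟨hz, -⟩)
          · exact absurd (by rw [hx]; exact Set.mem_insert _ _) ha
          · exact absurd (by rw [hy]; right; exact Set.mem_insert _ _) ha
          · exact absurd (by rw [hz]; right; right; rfl) ha
        · rintro ⟨a'', -, he⟩
          exact absurd he (by simp)
  rw [vdeg, hN, Set.ncard_image_of_injective _ Sum.inl_injective, ncard_val_preimage,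
    Set.diff_singleton_eq_self hva, vdeg]

lemma bridge_vdeg_inl (h1 : BridgeHyp G1 v1 x1 y1 z1) (h2 : BridgeHyp G2 v2 x2 y2 z2)
    (a : {a : V1 // a ≠ v1}) :
    vdeg (BridgeGraph G1 G2 v1 x1 y1 z1 v2 x2 y2 z2) (Sum.inl a) = vdeg G1 a.1 := by
  by_cases hx : a.1 = x1
  · exact bridge_vdeg_inl_x h1 h2 a hx
  by_cases hy : a.1 = y1
  · rw [bridge_perm12]
    exact bridge_vdeg_inl_x h1.swap12 h2.swap12 a hy
  by_cases hz : a.1 = z1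
  · rw [bridge_perm13]
    exact bridge_vdeg_inl_x h1.swap13 h2.swap13 a hz
  · exact bridge_vdeg_inl_other h1 a (by simp [hx, hy, hz])

lemma bridge_vdeg_inr (h1 : BridgeHyp G1 v1 x1 y1 z1) (h2 : BridgeHyp G2 v2 x2 y2 z2)
    (b : {b : V2 // b ≠ v2}) :
    vdeg (BridgeGraph G1 G2 v1 x1 y1 z1 v2 x2 y2 z2) (Sum.inr b) = vdeg G2 b.1 := by
  have h := vdeg_map (bridgeSwapIso (G1 := G2) (G2 := G1) (v1 := v2) (x1 := x2) (y1 := y2)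
    (z1 := z2) (v2 := v1) (x2 := x1) (y2 := y1) (z2 := z1)) (Sum.inl b)
  rw [show (bridgeSwapIso (Sum.inl b) : {a : V1 // a ≠ v1} ⊕ {b : V2 // b ≠ v2}) = Sum.inr b
    from rfl] at h
  rw [h, bridge_vdeg_inl h2 h1]

lemma bridge_bigset_ncard (h1 : BridgeHyp G1 v1 x1 y1 z1) (h2 : BridgeHyp G2 v2 x2 y2 z2) :
    {q | 3 < vdeg (BridgeGraph G1 G2 v1 x1 y1 z1 v2 x2 y2 z2) q}.ncard =
      {u | 3 < vdeg G1 u}.ncard + {u | 3 < vdeg G2 u}.ncard := by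
  have hset : {q | 3 < vdeg (BridgeGraph G1 G2 v1 x1 y1 z1 v2 x2 y2 z2) q} =
      Sum.inl '' ((Subtype.val : {a : V1 // a ≠ v1} → V1) ⁻¹' {u | 3 < vdeg G1 u}) ∪
      Sum.inr '' ((Subtype.val : {b : V2 // b ≠ v2} → V2) ⁻¹' {u | 3 < vdeg G2 u}) := by
    ext q
    cases q with
    | inl a =>
        simp only [Set.mem_setOf_eq, bridge_vdeg_inl h1 h2]
        constructor
        · intro h; exact Or.inl ⟨a, h, rfl⟩
        · rintro (⟨a', h', he⟩ | ⟨b', -, he⟩)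
          · cases Sum.inl.inj he; exact h'
          · exact absurd he (by simp)
    | inr b =>
        simp only [Set.mem_setOf_eq, bridge_vdeg_inr h1 h2]
        constructor
        · intro h; exact Or.inr ⟨b, h, rfl⟩
        · rintro (⟨a', -, he⟩ | ⟨b', h', he⟩)
          · exact absurd he (by simp)
          · cases Sum.inr.inj he; exact h'
  rw [hset, ncard_inl_union_inr, ncard_val_preimage, ncard_val_preimage,
    Set.diff_singleton_eq_self (by simp [h1.vdeg_eq]),
    Set.diff_singleton_eq_self (by simp [h2.vdeg_eq])]

end BridgeDeg
end Bridge

section EdgeJoin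
variable {V : Type*} {G : SimpleGraph V} {a b c d : V}

lemma ej_adj_inl_inl {u u' : V} :
    (EdgeJoinGraph G a b c d).Adj (Sum.inl u) (Sum.inl u') ↔
      G.Adj u u' ∧ ¬(u = a ∧ u' = b) ∧ ¬(u = b ∧ u' = a) ∧
        ¬(u = c ∧ u' = d) ∧ ¬(u = d ∧ u' = c) := by
  rw [EdgeJoinGraph, fromRel_adj]
  constructor
  · rintro ⟨-, h | h⟩
    · exact h
    · obtain ⟨h0, h1, h2, h3, h4⟩ := h
      exact ⟨h0.symm, fun ⟨p, q⟩ => h2 ⟨q, p⟩, fun ⟨p, q⟩ => h1 ⟨q, p⟩,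
        fun ⟨p, q⟩ => h4 ⟨q, p⟩, fun ⟨p, q⟩ => h3 ⟨q, p⟩⟩
  · intro h
    exact ⟨fun hh => h.1.ne (Sum.inl.inj hh), Or.inl h⟩

lemma ej_adj_inl_false {u : V} :
    (EdgeJoinGraph G a b c d).Adj (Sum.inl u) (Sum.inr false) ↔ u = a ∨ u = b := by
  rw [EdgeJoinGraph, fromRel_adj]
  constructor
  · rintro ⟨-, h | h⟩
    · exact h
    · exact h.elim
  · intro h
    exact ⟨Sum.inl_ne_inr, Or.inl h⟩

lemma ej_adj_inl_true {u : V} :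
    (EdgeJoinGraph G a b c d).Adj (Sum.inl u) (Sum.inr true) ↔ u = c ∨ u = d := by
  rw [EdgeJoinGraph, fromRel_adj]
  constructor
  · rintro ⟨-, h | h⟩
    · exact h
    · exact h.elim
  · intro h
    exact ⟨Sum.inl_ne_inr, Or.inl h⟩

lemma ej_adj_inr_inr {i i' : Bool} :
    (EdgeJoinGraph G a b c d).Adj (Sum.inr i) (Sum.inr i') ↔ i ≠ i' := by
  rw [EdgeJoinGraph, fromRel_adj]
  constructor
  · rintro ⟨h, -⟩
    exact fun hh => h (by rw [hh])
  · intro h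
    refine ⟨fun hh => h (Sum.inr.inj hh), Or.inl ?_⟩
    cases i <;> cases i' <;> simp_all

lemma ej_swap12 : EdgeJoinGraph G a b c d = EdgeJoinGraph G b a c d := by
  ext p q
  cases p with
  | inl u => cases q with
    | inl u' => rw [ej_adj_inl_inl, ej_adj_inl_inl]; tauto
    | inr i => cases i with
      | false => rw [ej_adj_inl_false, ej_adj_inl_false]; tauto
      | true => rw [ej_adj_inl_true, ej_adj_inl_true]
  | inr i => cases q with
    | inl u' => cases i with
      | false => rw [adj_comm, ej_adj_inl_false, adj_comm, ej_adj_inl_false]; tauto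
      | true => rw [adj_comm, ej_adj_inl_true, adj_comm, ej_adj_inl_true]
    | inr i' => rw [ej_adj_inr_inr, ej_adj_inr_inr]

lemma ej_swap34 : EdgeJoinGraph G a b c d = EdgeJoinGraph G a b d c := by
  ext p q
  cases p with
  | inl u => cases q with
    | inl u' => rw [ej_adj_inl_inl, ej_adj_inl_inl]; tauto
    | inr i => cases i with
      | false => rw [ej_adj_inl_false, ej_adj_inl_false]
      | true => rw [ej_adj_inl_true, ej_adj_inl_true]; tauto
  | inr i => cases q with
    | inl u' => cases i with
      | false => rw [adj_comm, ej_adj_inl_false, adj_comm, ej_adj_inl_false]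
      | true => rw [adj_comm, ej_adj_inl_true, adj_comm, ej_adj_inl_true]; tauto
    | inr i' => rw [ej_adj_inr_inr, ej_adj_inr_inr]

def ejSwapIso : EdgeJoinGraph G a b c d ≃g EdgeJoinGraph G c d a b where
  toEquiv := Equiv.sumCongr (Equiv.refl V) ⟨Bool.not, Bool.not, Bool.not_not, Bool.not_not⟩
  map_rel_iff' := by
    rintro (u | i) (u' | i')
    · show (EdgeJoinGraph G c d a b).Adj (Sum.inl u) (Sum.inl u') ↔ _
      rw [ej_adj_inl_inl, ej_adj_inl_inl]; tauto
    · cases i' with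
      | false =>
          show (EdgeJoinGraph G c d a b).Adj (Sum.inl u) (Sum.inr true) ↔ _
          rw [ej_adj_inl_true, ej_adj_inl_false]
      | true =>
          show (EdgeJoinGraph G c d a b).Adj (Sum.inl u) (Sum.inr false) ↔ _
          rw [ej_adj_inl_false, ej_adj_inl_true]
    · cases i with
      | false =>
          show (EdgeJoinGraph G c d a b).Adj (Sum.inr true) (Sum.inl u') ↔ _
          rw [adj_comm, ej_adj_inl_true, adj_comm, ej_adj_inl_false]
      | true =>
          show (EdgeJoinGraph G c d a b).Adj (Sum.inr false) (Sum.inl u') ↔ _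
          rw [adj_comm, ej_adj_inl_false, adj_comm, ej_adj_inl_true]
    · cases i <;> cases i' <;>
        · show (EdgeJoinGraph G c d a b).Adj (Sum.inr _) (Sum.inr _) ↔ _
          rw [ej_adj_inr_inr, ej_adj_inr_inr]
          simp

variable [Finite V]

lemma ej_vdeg_a (hab : G.Adj a b) (hac : a ≠ c) (had : a ≠ d) :
    vdeg (EdgeJoinGraph G a b c d) (Sum.inl a) = vdeg G a := by
  have hN : (EdgeJoinGraph G a b c d).neighborSet (Sum.inl a) =
      insert (Sum.inr false) (Sum.inl '' (G.neighborSet a \ {b})) := by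
    ext q
    cases q with
    | inl u' =>
        rw [mem_neighborSet, ej_adj_inl_inl]
        constructor
        · rintro ⟨h0, h1, -, -, -⟩
          exact Set.mem_insert_of_mem _ ⟨u', ⟨h0, fun hb => h1 ⟨rfl, hb⟩⟩, rfl⟩
        · intro hq
          rcases Set.mem_insert_iff.1 hq with hq | ⟨u'', ⟨h0, hb⟩, he⟩
          · exact absurd hq (by simp)
          · cases Sum.inl.inj he
            exact ⟨h0, fun h => hb h.2, fun h => hab.ne h.1, fun h => hac h.1,
              fun h => had h.1⟩
    | inr i =>
        cases i with
        | false =>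
            rw [mem_neighborSet, ej_adj_inl_false]
            constructor
            · intro _; exact Set.mem_insert _ _
            · intro _; exact Or.inl rfl
        | true =>
            rw [mem_neighborSet, ej_adj_inl_true]
            constructor
            · rintro (h | h)
              · exact absurd h hac
              · exact absurd h had
            · intro hq
              rcases Set.mem_insert_iff.1 hq with hq | ⟨u'', -, he⟩
              · exact absurd hq (by simp)
              · exact absurd he (by simp)
  have hbN : b ∈ G.neighborSet a := hab
  have hmem : G.neighborSet a = insert b (G.neighborSet a \ {b}) := by
    rw [Set.insert_diff_singleton, Set.insert_eq_self.2 hbN]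
  have hr : vdeg G a = (G.neighborSet a \ {b}).ncard + 1 := by
    rw [vdeg]
    conv_lhs => rw [hmem]
    rw [Set.ncard_insert_of_notMem (by simp)]
  rw [vdeg, hN, Set.ncard_insert_of_notMem (by simp),
    Set.ncard_image_of_injective _ Sum.inl_injective, hr]

lemma ej_vdeg_ac (hab : G.Adj a b) (had : G.Adj a d) (hbd : b ≠ d) :
    vdeg (EdgeJoinGraph G a b a d) (Sum.inl a) = vdeg G a := by
  have hN : (EdgeJoinGraph G a b a d).neighborSet (Sum.inl a) =
      insert (Sum.inr false) (insert (Sum.inr true)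
        (Sum.inl '' (G.neighborSet a \ {b, d}))) := by
    ext q
    cases q with
    | inl u' =>
        rw [mem_neighborSet, ej_adj_inl_inl]
        constructor
        · rintro ⟨h0, h1, -, h3, -⟩
          refine Set.mem_insert_of_mem _ (Set.mem_insert_of_mem _ ⟨u', ⟨h0, ?_⟩, rfl⟩)
          intro hm
          rcases Set.mem_insert_iff.1 hm with hm | hm
          · exact h1 ⟨rfl, hm⟩
          · exact h3 ⟨rfl, hm⟩
        · intro hq
          rcases Set.mem_insert_iff.1 hq with hq | hq
          · exact absurd hq (by simp)
          rcases Set.mem_insert_iff.1 hq with hq | ⟨u'', ⟨h0, hm⟩, he⟩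
          · exact absurd hq (by simp)
          · cases Sum.inl.inj he
            exact ⟨h0, fun h => hm (Set.mem_insert_iff.2 (Or.inl h.2)),
              fun h => hab.ne h.1, fun h => hm (Set.mem_insert_iff.2 (Or.inr h.2)),
              fun h => had.ne h.1⟩
    | inr i =>
        cases i with
        | false =>
            rw [mem_neighborSet, ej_adj_inl_false]
            constructor
            · intro _; exact Set.mem_insert _ _
            · intro _; exact Or.inl rfl
        | true =>
            rw [mem_neighborSet, ej_adj_inl_true]
            constructor
            · intro _; exact Set.mem_insert_of_mem _ (Set.mem_insert _ _)
            · intro _; exact Or.inl rfl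
  have hbN : b ∈ G.neighborSet a := hab
  have hdN : d ∈ G.neighborSet a := had
  have hmem : G.neighborSet a = insert b (insert d (G.neighborSet a \ {b, d})) := by
    ext u
    simp only [Set.mem_insert_iff, Set.mem_diff, Set.mem_singleton_iff]
    constructor
    · intro h
      by_cases hb : u = b
      · exact Or.inl hb
      by_cases hd : u = d
      · exact Or.inr (Or.inl hd)
      · exact Or.inr (Or.inr ⟨h, by simp [hb, hd]⟩)
    · rintro (rfl | rfl | ⟨h, -⟩)
      · exact hbN
      · exact hdN
      · exact h
  have hr : vdeg G a = (G.neighborSet a \ {b, d}).ncard + 1 + 1 := by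
    rw [vdeg]
    conv_lhs => rw [hmem]
    rw [Set.ncard_insert_of_notMem (by simp [hbd]), Set.ncard_insert_of_notMem (by simp)]
  rw [vdeg, hN, Set.ncard_insert_of_notMem (by simp), Set.ncard_insert_of_notMem (by simp),
    Set.ncard_image_of_injective _ Sum.inl_injective, hr]

lemma ej_vdeg_other {u : V} (ha : u ≠ a) (hb : u ≠ b) (hc : u ≠ c) (hd : u ≠ d) :
    vdeg (EdgeJoinGraph G a b c d) (Sum.inl u) = vdeg G u := by
  have hN : (EdgeJoinGraph G a b c d).neighborSet (Sum.inl u) =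
      Sum.inl '' G.neighborSet u := by
    ext q
    cases q with
    | inl u' =>
        rw [mem_neighborSet, ej_adj_inl_inl]
        constructor
        · rintro ⟨h0, -, -, -, -⟩
          exact ⟨u', h0, rfl⟩
        · rintro ⟨u'', h0, he⟩
          cases Sum.inl.inj he
          exact ⟨h0, fun h => ha h.1, fun h => hb h.1, fun h => hc h.1, fun h => hd h.1⟩
    | inr i =>
        cases i with
        | false =>
            rw [mem_neighborSet, ej_adj_inl_false]
            constructor
            · rintro (h | h)
              · exact absurd h ha
              · exact absurd h hb
            · rintro ⟨u'', -, he⟩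
              exact absurd he (by simp)
        | true =>
            rw [mem_neighborSet, ej_adj_inl_true]
            constructor
            · rintro (h | h)
              · exact absurd h hc
              · exact absurd h hd
            · rintro ⟨u'', -, he⟩
              exact absurd he (by simp)
  rw [vdeg, hN, Set.ncard_image_of_injective _ Sum.inl_injective, vdeg]

lemma ej_vdeg_false (hab : G.Adj a b) :
    vdeg (EdgeJoinGraph G a b c d) (Sum.inr false) = 3 := by
  have hN : (EdgeJoinGraph G a b c d).neighborSet (Sum.inr false) =
      {Sum.inl a, Sum.inl b, Sum.inr true} := by
    ext q
    cases q with
    | inl u =>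
        rw [mem_neighborSet, adj_comm, ej_adj_inl_false]
        simp only [Set.mem_insert_iff, Set.mem_singleton_iff, Sum.inl.injEq, reduceCtorEq,
          or_false]
    | inr i =>
        rw [mem_neighborSet, ej_adj_inr_inr]
        cases i <;> simp
  rw [vdeg, hN, Set.ncard_insert_of_notMem (by simp [hab.ne]),
    Set.ncard_insert_of_notMem (by simp), Set.ncard_singleton]

lemma ej_vdeg_true (hcd : G.Adj c d) :
    vdeg (EdgeJoinGraph G a b c d) (Sum.inr true) = 3 := by
  have h := vdeg_map (ejSwapIso (G := G) (a := c) (b := d) (c := a) (d := b)) (Sum.inr false)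
  rw [show ((ejSwapIso (G := G) (a := c) (b := d) (c := a) (d := b)) (Sum.inr false) : V ⊕ Bool)
    = Sum.inr true from rfl] at h
  rw [h, ej_vdeg_false hcd]

lemma ej_vdeg_first (hab : G.Adj a b) (hcd : G.Adj c d) (hne : s(a, b) ≠ s(c, d)) :
    vdeg (EdgeJoinGraph G a b c d) (Sum.inl a) = vdeg G a := by
  by_cases hac : a = c
  · subst hac
    have hbd : b ≠ d := fun h => hne (by rw [h])
    exact ej_vdeg_ac hab hcd hbd
  by_cases had : a = d
  · subst had
    rw [ej_swap34]
    have hbc : b ≠ c := fun h => hne (by rw [h, Sym2.eq_swap])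
    exact ej_vdeg_ac hab hcd.symm hbc
  · exact ej_vdeg_a hab hac had

lemma ej_vdeg_inl (hab : G.Adj a b) (hcd : G.Adj c d) (hne : s(a, b) ≠ s(c, d)) (u : V) :
    vdeg (EdgeJoinGraph G a b c d) (Sum.inl u) = vdeg G u := by
  by_cases hua : u = a
  · subst hua; exact ej_vdeg_first hab hcd hne
  by_cases hub : u = b
  · subst hub
    rw [ej_swap12]
    exact ej_vdeg_first hab.symm hcd (by rw [Sym2.eq_swap]; exact hne)
  have h := vdeg_map (ejSwapIso (G := G) (a := c) (b := d) (c := a) (d := b)) (Sum.inl u)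
  rw [show ((ejSwapIso (G := G) (a := c) (b := d) (c := a) (d := b)) (Sum.inl u) : V ⊕ Bool)
    = Sum.inl u from rfl] at h
  by_cases huc : u = c
  · subst huc
    rw [h]
    exact ej_vdeg_first hcd hab hne.symm
  by_cases hud : u = d
  · subst hud
    rw [h, ej_swap12]
    exact ej_vdeg_first hcd.symm hab (by rw [Sym2.eq_swap]; exact hne.symm)
  · exact ej_vdeg_other hua hub huc hud

lemma ej_reg (hreg : ∀ z, vdeg G z = 3) (hab : G.Adj a b) (hcd : G.Adj c d)
    (hne : s(a, b) ≠ s(c, d)) : ∀ q, vdeg (EdgeJoinGraph G a b c d) q = 3 := by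
  rintro (u | i)
  · rw [ej_vdeg_inl hab hcd hne u]; exact hreg u
  · cases i
    · exact ej_vdeg_false hab
    · exact ej_vdeg_true hcd

end EdgeJoin

lemma constructed_key {G : FinGraph} {j t p s : ℕ} (hc : Constructed G j t p s) :
    {v : G.V | 3 < vdeg G.graph v}.ncard = p ∧ p ≤ j + 1 ∧
      Nat.card G.V = 2 * j + 2 * t + p + s + 4 := by
  induction hc with
  | base G he =>
      obtain ⟨e⟩ := he
      refine ⟨?_, by omega, ?_⟩
      · rw [bigset_ncard_iso e.symm, bigset_of_reg vdeg_top_fin4, Set.ncard_empty]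
      · rw [Nat.card_congr e.toEquiv]
        simp [Nat.card_eq_fintype_card]
  | bridge G G1 G2 j1 t1 p1 s1 j2 t2 p2 s2 hc1 hc2 hb ih1 ih2 =>
      obtain ⟨hs1, hp1, hn1⟩ := ih1
      obtain ⟨hs2, hp2, hn2⟩ := ih2
      obtain ⟨v1, x1, y1, z1, v2, x2, y2, z2, h1, h2, ⟨e⟩⟩ := hb
      refine ⟨?_, by omega, ?_⟩
      · rw [← bigset_ncard_iso e, bridge_bigset_ncard h1 h2, hs1, hs2]
      · rw [Nat.card_congr e.toEquiv, Nat.card_sum, card_subtype_ne, card_subtype_ne]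
        omega
  | edgeJoin G G' j t p s hc' he ih =>
      obtain ⟨hsI, hpI, hnI⟩ := ih
      obtain ⟨hreg, -, a, b, c, d, hab, hcd, hne, ⟨e⟩⟩ := he
      have hp0 : p = 0 := by
        rw [bigset_of_reg hreg, Set.ncard_empty] at hsI; omega
      refine ⟨?_, hpI, ?_⟩
      · rw [← bigset_ncard_iso e, bigset_of_reg (ej_reg hreg hab hcd hne), Set.ncard_empty, hp0]
      · rw [Nat.card_congr e.toEquiv, Nat.card_sum]
        have hB : Nat.card Bool = 2 := by simp [Nat.card_eq_fintype_card]
        omega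
  | primarySpoke G G' j t p s hc' hps ih =>
      obtain ⟨hsI, hpI, hnI⟩ := ih
      obtain ⟨v, w, x, ⟨hvw, hvx, hwx, hadj, hreg⟩, hx3, ⟨e⟩⟩ := hps
      have hreg' : ∀ z, vdeg G'.graph z = 3 := by
        intro z
        by_cases hz : z = x
        · subst hz; exact hx3
        · exact hreg z hz
      have hp0 : p = 0 := by
        rw [bigset_of_reg hreg', Set.ncard_empty] at hsI; omega
      refine ⟨?_, by omega, ?_⟩
      · rw [← bigset_ncard_iso e, spoke_bigset hvw hvx hwx hadj hreg (le_of_eq hx3.symm),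
          Set.ncard_singleton, hp0]
      · rw [Nat.card_congr e.toEquiv, Nat.card_sum]
        have hU : Nat.card Unit = 1 := by simp [Nat.card_eq_fintype_card]
        omega
  | secondarySpoke G G' j t p s hc' hss ih =>
      obtain ⟨hsI, hpI, hnI⟩ := ih
      obtain ⟨v, w, x, ⟨hvw, hvx, hwx, hadj, hreg⟩, hx3, ⟨e⟩⟩ := hss
      have hp1 : p = 1 := by
        rw [bigset_of_one hreg hx3, Set.ncard_singleton] at hsI; omega
      refine ⟨?_, hpI, ?_⟩
      · rw [← bigset_ncard_iso e, spoke_bigset hvw hvx hwx hadj hreg hx3.le,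
          Set.ncard_singleton]
        omega
      · rw [Nat.card_congr e.toEquiv, Nat.card_sum]
        have hU : Nat.card Unit = 1 := by simp [Nat.card_eq_fintype_card]
        omega

/-- If a uniformly 3-connected graph `G` on `n` vertices is constructed from complete graphs
on four vertices by `j` bridge operations, `t` edge joins, `p` primary and `s` secondary
spoke operations, then `j + 1 ≥ p` and consequently `p ≤ ⌊(n − 2)/3⌋`. -/
theorem primary_le_bridges_succ (G : FinGraph) (j t p s : ℕ)
    (hG : UniformlyConnected 3 G.graph) (hc : Constructed G j t p s) :
    p ≤ j + 1 ∧ p ≤ (Fintype.card G.V - 2) / 3 := by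
  obtain ⟨h1, h2, h3⟩ := constructed_key hc
  rw [Nat.card_eq_fintype_card] at h3
  exact ⟨h2, by omega⟩
end

section
/- Let G1 and G2 be graphs with vertices v1 ∈ V(G1) and v2 ∈ V(G2) of degree 3, with neighborhoods N(v1)={x1,y1,z1} and N(v2)={x2,y2,z2}, and let G = (G1−v1) ∪ (G2−v2) + x1x2 + y1y2 + z1z2. Let H be the clique-sum of the line graphs L(G1) and L(G2) formed by identifying the clique {v1x1, v1y1, v1z1} of L(G1) (the edges of G1 incident with v1) with the clique {v2x2, v2y2, v2z2} of L(G2) (the edges of G2 incident with v2), identifying v1x1 with v2x2, v1y1 with v2y2, and v1z1 with v2z2. Then the line graph L(G) is a proper subgraph of H. -/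
open SimpleGraph

/-- The clique-sum of the line graphs `L(G1)` and `L(G2)` obtained by identifying the clique
of edges of `G1` at `v1` with the clique of edges of `G2` at `v2`, where `v1x1` is identified
with `v2x2`, `v1y1` with `v2y2`, and `v1z1` with `v2z2`. The vertices are the edges of `G1`
(with the three edges at `v1` standing for the identified pairs) together with the edges of
`G2` not incident with `v2`. -/
def CliqueSumLineGraphs {V1 V2 : Type*} (G1 : SimpleGraph V1) (G2 : SimpleGraph V2)
    (v1 x1 y1 z1 : V1) (v2 x2 y2 z2 : V2) :
    SimpleGraph (G1.edgeSet ⊕ {f : G2.edgeSet // v2 ∉ (f : Sym2 V2)}) :=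
  SimpleGraph.fromRel (fun p q =>
    match p, q with
    | Sum.inl e, Sum.inl e' => ∃ a : V1, a ∈ (e : Sym2 V1) ∧ a ∈ (e' : Sym2 V1)
    | Sum.inr f, Sum.inr f' => ∃ b : V2, b ∈ (f.1 : Sym2 V2) ∧ b ∈ (f'.1 : Sym2 V2)
    | Sum.inl e, Sum.inr f =>
        ((e : Sym2 V1) = s(v1, x1) ∧ x2 ∈ (f.1 : Sym2 V2)) ∨
        ((e : Sym2 V1) = s(v1, y1) ∧ y2 ∈ (f.1 : Sym2 V2)) ∨
        ((e : Sym2 V1) = s(v1, z1) ∧ z2 ∈ (f.1 : Sym2 V2))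
    | Sum.inr _, Sum.inl _ => False)


section BridgeAux
variable {V1 V2 : Type} (G1 : SimpleGraph V1) (G2 : SimpleGraph V2)
  (v1 x1 y1 z1 : V1) (v2 x2 y2 z2 : V2)

/-- Endpoint-pair to edge-data map for the bridge graph. -/
def bgF (v1 : V1) (v2 : V2) :
    ({a : V1 // a ≠ v1} ⊕ {b : V2 // b ≠ v2}) → ({a : V1 // a ≠ v1} ⊕ {b : V2 // b ≠ v2}) →
      Sym2 V1 ⊕ Sym2 V2
  | Sum.inl a, Sum.inl a' => Sum.inl s(a.1, a'.1)
  | Sum.inr b, Sum.inr b' => Sum.inr s(b.1, b'.1)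
  | Sum.inl a, Sum.inr _ => Sum.inl s(v1, a.1)
  | Sum.inr _, Sum.inl a => Sum.inl s(v1, a.1)

lemma bgF_symm (p q) : bgF (V2 := V2) v1 v2 p q = bgF v1 v2 q p := by
  rcases p with a | b <;> rcases q with a' | b' <;> simp [bgF, Sym2.eq_swap]

def bpsi : Sym2 ({a : V1 // a ≠ v1} ⊕ {b : V2 // b ≠ v2}) → Sym2 V1 ⊕ Sym2 V2 :=
  Sym2.lift ⟨bgF v1 v2, bgF_symm v1 v2⟩

@[simp] lemma bpsi_mk (p q) : bpsi (V2 := V2) v1 v2 s(p, q) = bgF v1 v2 p q := rfl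

def GoodT : Sym2 V1 ⊕ Sym2 V2 → Prop
  | Sum.inl s => s ∈ G1.edgeSet
  | Sum.inr s => s ∈ G2.edgeSet ∧ v2 ∉ s

def packE : (r : Sym2 V1 ⊕ Sym2 V2) → GoodT G1 G2 v2 r →
    (G1.edgeSet ⊕ {f : G2.edgeSet // v2 ∉ (f : Sym2 V2)})
  | Sum.inl s, h => Sum.inl ⟨s, h⟩
  | Sum.inr s, h => Sum.inr ⟨⟨s, h.1⟩, h.2⟩

lemma packE_inj {r r'} {h : GoodT G1 G2 v2 r} {h' : GoodT G1 G2 v2 r'}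
    (hh : packE G1 G2 v2 r h = packE G1 G2 v2 r' h') : r = r' := by
  rcases r with s | s <;> rcases r' with s' | s' <;> simp [packE, Subtype.ext_iff] at hh <;> simp [hh]

lemma packE_congr {r r'} (hrr : r = r') (h : GoodT G1 G2 v2 r) (h' : GoodT G1 G2 v2 r') :
    packE G1 G2 v2 r h = packE G1 G2 v2 r' h' := by
  subst hrr; rfl

variable {G1 G2 v1 x1 y1 z1 v2 x2 y2 z2}

lemma bridge_adj {p q} :
    (BridgeGraph G1 G2 v1 x1 y1 z1 v2 x2 y2 z2).Adj p q ↔ p ≠ q ∧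
      ((match p, q with
        | Sum.inl a, Sum.inl a' => G1.Adj a.1 a'.1
        | Sum.inr b, Sum.inr b' => G2.Adj b.1 b'.1
        | Sum.inl a, Sum.inr b =>
            (a.1 = x1 ∧ b.1 = x2) ∨ (a.1 = y1 ∧ b.1 = y2) ∨ (a.1 = z1 ∧ b.1 = z2)
        | Sum.inr _, Sum.inl _ => False) ∨
       (match q, p with
        | Sum.inl a, Sum.inl a' => G1.Adj a.1 a'.1
        | Sum.inr b, Sum.inr b' => G2.Adj b.1 b'.1
        | Sum.inl a, Sum.inr b =>
            (a.1 = x1 ∧ b.1 = x2) ∨ (a.1 = y1 ∧ b.1 = y2) ∨ (a.1 = z1 ∧ b.1 = z2)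
        | Sum.inr _, Sum.inl _ => False)) := by
  rw [BridgeGraph, SimpleGraph.fromRel_adj]
  tauto

lemma good_g (h1 : BridgeHyp G1 v1 x1 y1 z1) {p q}
    (h : (BridgeGraph G1 G2 v1 x1 y1 z1 v2 x2 y2 z2).Adj p q) :
    GoodT G1 G2 v2 (bgF v1 v2 p q) := by
  obtain ⟨x1y1, x1z1, y1z1, hN⟩ := h1
  rw [bridge_adj] at h
  obtain ⟨hne, h⟩ := h
  have adjN : ∀ w : V1, (w = x1 ∨ w = y1 ∨ w = z1) → G1.Adj v1 w := by
    intro w hw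
    have : w ∈ G1.neighborSet v1 := by rw [hN]; simpa using hw
    exact this
  rcases p with a | b <;> rcases q with a' | b'
  · have : G1.Adj a.1 a'.1 := by
      rcases h with h | h
      · exact h
      · exact h.symm
    exact this
  · simp only [or_false] at h
    have := adjN a.1 (by tauto)
    exact this
  · simp only [false_or] at h
    have := adjN a'.1 (by tauto)
    exact this
  · have hadj : G2.Adj b.1 b'.1 := by
      rcases h with h | h
      · exact h
      · exact h.symm
    refine ⟨hadj, ?_⟩
    rw [Sym2.mem_iff]
    rintro (h | h)
    · exact b.2 h.symm
    · exact b'.2 h.symm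

lemma good_psi (h1 : BridgeHyp G1 v1 x1 y1 z1) {e}
    (he : e ∈ (BridgeGraph G1 G2 v1 x1 y1 z1 v2 x2 y2 z2).edgeSet) :
    GoodT G1 G2 v2 (bpsi v1 v2 e) := by
  induction e using Sym2.ind with
  | _ p q =>
    rw [SimpleGraph.mem_edgeSet] at he
    exact good_g h1 he

lemma bgF_inj (h1 : BridgeHyp G1 v1 x1 y1 z1) {p q p' q'}
    (hpq : (BridgeGraph G1 G2 v1 x1 y1 z1 v2 x2 y2 z2).Adj p q)
    (hpq' : (BridgeGraph G1 G2 v1 x1 y1 z1 v2 x2 y2 z2).Adj p' q')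
    (h : bgF v1 v2 p q = bgF v1 v2 p' q') : s(p, q) = s(p', q') := by
  obtain ⟨x1y1, x1z1, y1z1, hN⟩ := h1
  rw [bridge_adj] at hpq hpq'
  obtain ⟨hne, hpq⟩ := hpq
  obtain ⟨hne', hpq'⟩ := hpq'
  have partner : ∀ (a : {a : V1 // a ≠ v1}) (b b' : {b : V2 // b ≠ v2}),
      ((a.1 = x1 ∧ b.1 = x2) ∨ (a.1 = y1 ∧ b.1 = y2) ∨ (a.1 = z1 ∧ b.1 = z2)) →
      ((a.1 = x1 ∧ b'.1 = x2) ∨ (a.1 = y1 ∧ b'.1 = y2) ∨ (a.1 = z1 ∧ b'.1 = z2)) →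
      b = b' := by
    rintro a b b' (⟨ha, hb⟩ | ⟨ha, hb⟩ | ⟨ha, hb⟩) (⟨ha', hb'⟩ | ⟨ha', hb'⟩ | ⟨ha', hb'⟩) <;>
      first
        | (exact Subtype.ext (hb.trans hb'.symm))
        | (exact absurd (ha.symm.trans ha') (by tauto))
  rcases p with a | b <;> rcases q with a' | b' <;>
    rcases p' with c | d <;> rcases q' with c' | d' <;>
    simp only [bgF, Sum.inl.injEq, Sum.inr.injEq, reduceCtorEq] at h
  · -- inl-inl vs inl-inl
    rw [Sym2.eq_iff] at h ⊢
    rcases h with ⟨h₁, h₂⟩ | ⟨h₁, h₂⟩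
    · exact Or.inl ⟨congrArg Sum.inl (Subtype.ext h₁), congrArg Sum.inl (Subtype.ext h₂)⟩
    · exact Or.inr ⟨congrArg Sum.inl (Subtype.ext h₁), congrArg Sum.inl (Subtype.ext h₂)⟩
  · -- inl-inl vs bridge (inl,inr)
    exfalso
    rw [Sym2.eq_iff] at h
    rcases h with ⟨h₁, _⟩ | ⟨_, h₂⟩
    · exact a.2 h₁
    · exact a'.2 h₂
  · -- inl-inl vs bridge (inr,inl)
    exfalso
    rw [Sym2.eq_iff] at h
    rcases h with ⟨h₁, _⟩ | ⟨_, h₂⟩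
    · exact a.2 h₁
    · exact a'.2 h₂
  · -- bridge (inl,inr) vs inl-inl
    exfalso
    rw [Sym2.eq_iff] at h
    rcases h with ⟨h₁, _⟩ | ⟨h₁, _⟩
    · exact c.2 h₁.symm
    · exact c'.2 h₁.symm
  · -- bridge vs bridge, both (inl,inr)
    rw [Sym2.eq_iff] at h
    have hac : a = c := by
      rcases h with ⟨_, h₂⟩ | ⟨h₁, h₂⟩
      · exact Subtype.ext h₂
      · exact absurd h₂ a.2
    subst hac
    simp only [or_false, false_or] at hpq hpq'
    have : b' = d' := partner a b' d' hpq hpq'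
    rw [this]
  · -- bridge (inl,inr) vs bridge (inr,inl)
    rw [Sym2.eq_iff] at h
    have hac : a = c' := by
      rcases h with ⟨_, h₂⟩ | ⟨h₁, h₂⟩
      · exact Subtype.ext h₂
      · exact absurd h₂ a.2
    subst hac
    simp only [or_false, false_or] at hpq hpq'
    have : b' = d := partner a b' d hpq hpq'
    rw [this, Sym2.eq_swap]
  · -- bridge (inr,inl) vs inl-inl
    exfalso
    rw [Sym2.eq_iff] at h
    rcases h with ⟨h₁, _⟩ | ⟨h₁, _⟩
    · exact c.2 h₁.symm
    · exact c'.2 h₁.symm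
  · -- bridge (inr,inl) vs bridge (inl,inr)
    rw [Sym2.eq_iff] at h
    have hac : a' = c := by
      rcases h with ⟨_, h₂⟩ | ⟨h₁, h₂⟩
      · exact Subtype.ext h₂
      · exact absurd h₂ a'.2
    subst hac
    simp only [or_false, false_or] at hpq hpq'
    have : b = d' := partner a' b d' hpq hpq'
    rw [this, Sym2.eq_swap]
  · -- bridge (inr,inl) vs bridge (inr,inl)
    rw [Sym2.eq_iff] at h
    have hac : a' = c' := by
      rcases h with ⟨_, h₂⟩ | ⟨h₁, h₂⟩
      · exact Subtype.ext h₂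
      · exact absurd h₂ a'.2
    subst hac
    simp only [or_false, false_or] at hpq hpq'
    have : b = d := partner a' b d hpq hpq'
    rw [this]
  · -- inr-inr vs inr-inr
    rw [Sym2.eq_iff] at h ⊢
    rcases h with ⟨h₁, h₂⟩ | ⟨h₁, h₂⟩
    · exact Or.inl ⟨congrArg Sum.inr (Subtype.ext h₁), congrArg Sum.inr (Subtype.ext h₂)⟩
    · exact Or.inr ⟨congrArg Sum.inr (Subtype.ext h₁), congrArg Sum.inr (Subtype.ext h₂)⟩

lemma cs_adj {p q} :
    (CliqueSumLineGraphs G1 G2 v1 x1 y1 z1 v2 x2 y2 z2).Adj p q ↔ p ≠ q ∧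
      ((match p, q with
        | Sum.inl e, Sum.inl e' => ∃ a : V1, a ∈ (e : Sym2 V1) ∧ a ∈ (e' : Sym2 V1)
        | Sum.inr f, Sum.inr f' => ∃ b : V2, b ∈ (f.1 : Sym2 V2) ∧ b ∈ (f'.1 : Sym2 V2)
        | Sum.inl e, Sum.inr f =>
            ((e : Sym2 V1) = s(v1, x1) ∧ x2 ∈ (f.1 : Sym2 V2)) ∨
            ((e : Sym2 V1) = s(v1, y1) ∧ y2 ∈ (f.1 : Sym2 V2)) ∨
            ((e : Sym2 V1) = s(v1, z1) ∧ z2 ∈ (f.1 : Sym2 V2))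
        | Sum.inr _, Sum.inl _ => False) ∨
       (match q, p with
        | Sum.inl e, Sum.inl e' => ∃ a : V1, a ∈ (e : Sym2 V1) ∧ a ∈ (e' : Sym2 V1)
        | Sum.inr f, Sum.inr f' => ∃ b : V2, b ∈ (f.1 : Sym2 V2) ∧ b ∈ (f'.1 : Sym2 V2)
        | Sum.inl e, Sum.inr f =>
            ((e : Sym2 V1) = s(v1, x1) ∧ x2 ∈ (f.1 : Sym2 V2)) ∨
            ((e : Sym2 V1) = s(v1, y1) ∧ y2 ∈ (f.1 : Sym2 V2)) ∨
            ((e : Sym2 V1) = s(v1, z1) ∧ z2 ∈ (f.1 : Sym2 V2))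
        | Sum.inr _, Sum.inl _ => False)) := by
  rw [CliqueSumLineGraphs, SimpleGraph.fromRel_adj]
  tauto

lemma hom_aux {w q q'}
    (hq : (BridgeGraph G1 G2 v1 x1 y1 z1 v2 x2 y2 z2).Adj w q)
    (hq' : (BridgeGraph G1 G2 v1 x1 y1 z1 v2 x2 y2 z2).Adj w q')
    (hne : bgF v1 v2 w q ≠ bgF v1 v2 w q')
    (hg : GoodT G1 G2 v2 (bgF v1 v2 w q)) (hg' : GoodT G1 G2 v2 (bgF v1 v2 w q')) :
    (CliqueSumLineGraphs G1 G2 v1 x1 y1 z1 v2 x2 y2 z2).Adj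
      (packE G1 G2 v2 (bgF v1 v2 w q) hg) (packE G1 G2 v2 (bgF v1 v2 w q') hg') := by
  rw [cs_adj]
  refine ⟨fun hcon => hne (packE_inj G1 G2 v2 hcon), ?_⟩
  rw [bridge_adj] at hq hq'
  rcases w with a | b
  · rcases q with a' | b' <;> rcases q' with c | d <;>
      · left
        refine ⟨a.1, by simp [bgF, packE], by simp [bgF, packE]⟩
  · rcases q with a' | b' <;> rcases q' with c | d
    · -- both bridges on V1 side: share v1
      left
      exact ⟨v1, by simp [bgF, packE], by simp [bgF, packE]⟩
    · -- bridge vs inr edge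
      left
      simp only [bgF, packE]
      obtain ⟨-, hq⟩ := hq
      simp only [or_false, false_or] at hq
      rcases hq with ⟨ha, hb⟩ | ⟨ha, hb⟩ | ⟨ha, hb⟩
      · exact Or.inl ⟨by rw [ha], by rw [← hb]; simp⟩
      · exact Or.inr (Or.inl ⟨by rw [ha], by rw [← hb]; simp⟩)
      · exact Or.inr (Or.inr ⟨by rw [ha], by rw [← hb]; simp⟩)
    · -- inr edge vs bridge
      right
      simp only [bgF, packE]
      obtain ⟨-, hq'⟩ := hq'
      simp only [or_false, false_or] at hq'
      rcases hq' with ⟨ha, hb⟩ | ⟨ha, hb⟩ | ⟨ha, hb⟩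
      · exact Or.inl ⟨by rw [ha], by rw [← hb]; simp⟩
      · exact Or.inr (Or.inl ⟨by rw [ha], by rw [← hb]; simp⟩)
      · exact Or.inr (Or.inr ⟨by rw [ha], by rw [← hb]; simp⟩)
    · -- both inr edges: share b
      left
      exact ⟨b.1, by simp [bgF, packE], by simp [bgF, packE]⟩

lemma psi_inj (h1 : BridgeHyp G1 v1 x1 y1 z1) {e f}
    (he : e ∈ (BridgeGraph G1 G2 v1 x1 y1 z1 v2 x2 y2 z2).edgeSet)
    (hf : f ∈ (BridgeGraph G1 G2 v1 x1 y1 z1 v2 x2 y2 z2).edgeSet)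
    (h : bpsi v1 v2 e = bpsi v1 v2 f) : e = f := by
  induction e using Sym2.ind with
  | _ p q =>
    induction f using Sym2.ind with
    | _ p' q' =>
      exact bgF_inj h1 ((SimpleGraph.mem_edgeSet _).mp he) ((SimpleGraph.mem_edgeSet _).mp hf) h

lemma hom_main (h1 : BridgeHyp G1 v1 x1 y1 z1) {e f}
    (he : e ∈ (BridgeGraph G1 G2 v1 x1 y1 z1 v2 x2 y2 z2).edgeSet)
    (hf : f ∈ (BridgeGraph G1 G2 v1 x1 y1 z1 v2 x2 y2 z2).edgeSet)
    (hnef : e ≠ f) (w) (hw1 : w ∈ e) (hw2 : w ∈ f)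
    (hg : GoodT G1 G2 v2 (bpsi v1 v2 e)) (hg' : GoodT G1 G2 v2 (bpsi v1 v2 f)) :
    (CliqueSumLineGraphs G1 G2 v1 x1 y1 z1 v2 x2 y2 z2).Adj
      (packE G1 G2 v2 (bpsi v1 v2 e) hg) (packE G1 G2 v2 (bpsi v1 v2 f) hg') := by
  induction e using Sym2.ind with
  | _ p q =>
    induction f using Sym2.ind with
    | _ p' q' =>
      have hadj : (BridgeGraph G1 G2 v1 x1 y1 z1 v2 x2 y2 z2).Adj p q :=
        (SimpleGraph.mem_edgeSet _).mp he
      have hadj' : (BridgeGraph G1 G2 v1 x1 y1 z1 v2 x2 y2 z2).Adj p' q' :=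
        (SimpleGraph.mem_edgeSet _).mp hf
      rcases Sym2.mem_iff.mp hw1 with rfl | rfl <;> rcases Sym2.mem_iff.mp hw2 with h' | h'
      · -- w = p, w = p'
        subst h'
        refine hom_aux hadj hadj' (fun hcon => hnef ?_) hg hg'
        exact bgF_inj h1 hadj hadj' hcon
      · -- w = p, w = q'
        subst h'
        have hg2 : GoodT G1 G2 v2 (bgF v1 v2 w p') := good_g h1 hadj'.symm
        rw [packE_congr G1 G2 v2
          (show bpsi v1 v2 s(p', w) = bgF v1 v2 w p' from bgF_symm v1 v2 p' w) hg' hg2]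
        refine hom_aux hadj hadj'.symm (fun hcon => hnef ?_) hg hg2
        have h3 := bgF_inj h1 hadj hadj'.symm hcon
        rw [h3, Sym2.eq_swap]
      · -- w = q, w = p'
        subst h'
        have hg2 : GoodT G1 G2 v2 (bgF v1 v2 w p) := good_g h1 hadj.symm
        rw [packE_congr G1 G2 v2
          (show bpsi v1 v2 s(p, w) = bgF v1 v2 w p from bgF_symm v1 v2 p w) hg hg2]
        refine hom_aux hadj.symm hadj' (fun hcon => hnef ?_) hg2 hg'
        have h3 := bgF_inj h1 hadj.symm hadj' hcon
        rw [← h3, Sym2.eq_swap]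
      · -- w = q, w = q'
        subst h'
        have hg2 : GoodT G1 G2 v2 (bgF v1 v2 w p) := good_g h1 hadj.symm
        have hg2' : GoodT G1 G2 v2 (bgF v1 v2 w p') := good_g h1 hadj'.symm
        rw [packE_congr G1 G2 v2
          (show bpsi v1 v2 s(p, w) = bgF v1 v2 w p from bgF_symm v1 v2 p w) hg hg2,
          packE_congr G1 G2 v2
          (show bpsi v1 v2 s(p', w) = bgF v1 v2 w p' from bgF_symm v1 v2 p' w) hg' hg2']
        refine hom_aux hadj.symm hadj'.symm (fun hcon => hnef ?_) hg2 hg2'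
        have h3 := bgF_inj h1 hadj.symm hadj'.symm hcon
        rw [Sym2.eq_swap, h3, Sym2.eq_swap]

end BridgeAux

/-- **Lemma 16.** If `G` is the result of applying the bridge operation on `G1` and `G2`, and
`H` is the clique-sum of `L(G1)` and `L(G2)` formed by identifying the edges at `v1` with the
edges at `v2`, then `L(G)` is a proper subgraph of `H`: there is an injective homomorphism
`φ` of `L(G)` into `H` which is not an isomorphism onto `H`. -/
theorem lineGraph_bridge_proper_subgraph {V1 V2 : Type} [Fintype V1] [Fintype V2]
    (G1 : SimpleGraph V1) (G2 : SimpleGraph V2)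
    (v1 x1 y1 z1 : V1) (v2 x2 y2 z2 : V2)
    (h1 : BridgeHyp G1 v1 x1 y1 z1) (h2 : BridgeHyp G2 v2 x2 y2 z2) :
    ∃ φ : (BridgeGraph G1 G2 v1 x1 y1 z1 v2 x2 y2 z2).edgeSet →
        (G1.edgeSet ⊕ {f : G2.edgeSet // v2 ∉ (f : Sym2 V2)}),
      Function.Injective φ ∧
      (∀ a b, (BridgeGraph G1 G2 v1 x1 y1 z1 v2 x2 y2 z2).lineGraph.Adj a b →
        (CliqueSumLineGraphs G1 G2 v1 x1 y1 z1 v2 x2 y2 z2).Adj (φ a) (φ b)) ∧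
      (¬ Function.Surjective φ ∨ ∃ a b,
        (CliqueSumLineGraphs G1 G2 v1 x1 y1 z1 v2 x2 y2 z2).Adj (φ a) (φ b) ∧
        ¬ (BridgeGraph G1 G2 v1 x1 y1 z1 v2 x2 y2 z2).lineGraph.Adj a b) := by
  have hax1 : G1.Adj v1 x1 := by
    rw [← SimpleGraph.mem_neighborSet, h1.2.2.2]; simp
  have hay1 : G1.Adj v1 y1 := by
    rw [← SimpleGraph.mem_neighborSet, h1.2.2.2]; simp
  have hbx2 : G2.Adj v2 x2 := by
    rw [← SimpleGraph.mem_neighborSet, h2.2.2.2]; simp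
  have hby2 : G2.Adj v2 y2 := by
    rw [← SimpleGraph.mem_neighborSet, h2.2.2.2]; simp
  refine ⟨fun x => packE G1 G2 v2 (bpsi v1 v2 x.1) (good_psi h1 x.2), ?_, ?_, ?_⟩
  · rintro ⟨e, he⟩ ⟨f, hf⟩ h
    exact Subtype.ext (psi_inj h1 he hf (packE_inj G1 G2 v2 h))
  · rintro ⟨e, he⟩ ⟨f, hf⟩ hadj
    rw [SimpleGraph.lineGraph_adj_iff_exists] at hadj
    obtain ⟨hnef, w, hw1, hw2⟩ := hadj
    exact hom_main h1 he hf (fun h => hnef (Subtype.ext h)) w hw1 hw2 _ _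
  · refine Or.inr ⟨⟨s(Sum.inl ⟨x1, hax1.ne'⟩, Sum.inr ⟨x2, hbx2.ne'⟩), ?_⟩,
      ⟨s(Sum.inl ⟨y1, hay1.ne'⟩, Sum.inr ⟨y2, hby2.ne'⟩), ?_⟩, ?_, ?_⟩
    · rw [SimpleGraph.mem_edgeSet, bridge_adj]
      exact ⟨by simp, Or.inl (Or.inl ⟨rfl, rfl⟩)⟩
    · rw [SimpleGraph.mem_edgeSet, bridge_adj]
      exact ⟨by simp, Or.inl (Or.inr (Or.inl ⟨rfl, rfl⟩))⟩
    · simp only [bpsi_mk, bgF, packE]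
      rw [cs_adj]
      constructor
      · intro hcon
        simp only [Sum.inl.injEq, Subtype.mk.injEq, Subtype.ext_iff, Sym2.eq_iff] at hcon
        rcases hcon with ⟨-, h⟩ | ⟨h, h'⟩
        · exact h1.1 h
        · exact hax1.ne' h'
      · exact Or.inl ⟨v1, by simp, by simp⟩
    · rw [SimpleGraph.lineGraph_adj_iff_exists]
      rintro ⟨-, w, hw1, hw2⟩
      simp only [Sym2.mem_iff] at hw1 hw2
      rcases hw1 with rfl | rfl <;> rcases hw2 with h | h <;>
        simp only [Sum.inl.injEq, Sum.inr.injEq, Subtype.mk.injEq, reduceCtorEq] at h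
      · exact h1.1 h
      · exact h2.1 h
end
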